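/- Let a_1, …, a_n be linearly independent vectors in ℝ^n, and for I ⊆ {1,…,n} with |I| ≥ 2 put h_I = ∑_{i∈I} a_i. Let 2 ≤ m ≤ n−1 and let I_1 ⊋ I_2 ⊋ … ⊋ I_m be subsets of {1,…,n}, each with at least two elements. Let A_1 be a set obtained from {a_1,…,a_n} by removing m of the vectors a_i and adding the m vectors h_{I_1}, …, h_{I_m}, and suppose that A_1 consists of n linearly independent vectors (so A_1 spans an n-cone N_1). Then for every k with 1 ≤ k < m there is exactly one index i ∈ I_k \ I_{k+1} such that the set A_2 obtained from A_1 by replacing h_{I_k} with a_i is linearly independent and the cone generated by A_1 is contained in the cone generated by A_2. -/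

import Mathlib

/-- The convex cone generated by a set `S`: all finite nonnegative combinations
of elements of `S`. -/
def coneOf {E : Type*} [AddCommGroup E] [Module ℝ E] (S : Set E) : Set E :=
  {x | ∃ (m : ℕ) (c : Fin m → ℝ) (v : Fin m → E),
    (∀ t, 0 ≤ c t) ∧ (∀ t, v t ∈ S) ∧ x = ∑ t, c t • v t}

section ConeLemmas
variable {E : Type*} [AddCommGroup E] [Module ℝ E] {S T : Set E}

theorem mem_coneOf_self {v : E} (h : v ∈ S) : v ∈ coneOf S :=
  ⟨1, fun _ => 1, fun _ => v, fun _ => zero_le_one, fun _ => h, by simp⟩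

theorem coneOf_zero : (0 : E) ∈ coneOf S :=
  ⟨0, fun _ => 0, fun t => t.elim0, fun t => le_rfl, fun t => t.elim0, by simp⟩

theorem coneOf_add {x y : E} (hx : x ∈ coneOf S) (hy : y ∈ coneOf S) : x + y ∈ coneOf S := by
  obtain ⟨p, c, v, hc, hv, rfl⟩ := hx
  obtain ⟨q, d, w, hd, hw, rfl⟩ := hy
  refine ⟨p + q, Fin.append c d, Fin.append v w, ?_, ?_, ?_⟩
  · intro t
    induction t using Fin.addCases with
    | left t => simpa using hc t
    | right t => simpa using hd t
  · intro t
    induction t using Fin.addCases with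
    | left t => simpa using hv t
    | right t => simpa using hw t
  · rw [Fin.sum_univ_add]
    simp

theorem coneOf_smul {r : ℝ} {x : E} (hr : 0 ≤ r) (hx : x ∈ coneOf S) : r • x ∈ coneOf S := by
  obtain ⟨p, c, v, hc, hv, rfl⟩ := hx
  exact ⟨p, fun t => r * c t, v, fun t => mul_nonneg hr (hc t),
    hv, by rw [Finset.smul_sum]; simp [mul_smul]⟩

theorem coneOf_subset (h : ∀ v ∈ S, v ∈ coneOf T) : coneOf S ⊆ coneOf T := by
  rintro x ⟨p, c, v, hc, hv, rfl⟩
  exact Finset.sum_induction _ (· ∈ coneOf T) (fun _ _ => coneOf_add) coneOf_zero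
    (fun t _ => coneOf_smul (hc t) (h _ (hv t)))

theorem coneOf_subset_span : coneOf S ⊆ (Submodule.span ℝ S : Set E) := by
  rintro x ⟨p, c, v, hc, hv, rfl⟩
  exact Submodule.sum_mem _ fun t _ =>
    Submodule.smul_mem _ _ (Submodule.subset_span (hv t))

theorem sum_mem_coneOf {α : Type*} (s : Finset α) (f : α → E) (h : ∀ t ∈ s, f t ∈ coneOf S) :
    (∑ t ∈ s, f t) ∈ coneOf S :=
  Finset.sum_induction _ (· ∈ coneOf S) (fun _ _ => coneOf_add) coneOf_zero h

end ConeLemmas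

theorem fintype_card_irrel {α : Type*} {i1 i2 : Fintype α} :
    @Fintype.card α i1 = @Fintype.card α i2 := by
  congr 1; exact Subsingleton.elim _ _

theorem chain_card_aux {α : Type*} [DecidableEq α] (m : ℕ) (S : ℕ → Finset α)
    (hstrict : ∀ p q, p < q → q < m → S q ⊂ S p) :
    ∀ d p, p + d < m → (S (p + d)).card + d ≤ (S p).card := by
  intro d
  induction d with
  | zero => simp
  | succ d ih =>
    intro p hp
    have h1 := ih p (by omega)
    have h2 : S (p + (d + 1)) ⊂ S (p + d) := hstrict _ _ (by omega) (by omega)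
    have h3 := Finset.card_lt_card h2
    omega


/-- for a chain `I_1 ⊋ … ⊋ I_m` and a linearly independent set `A_1`
obtained from `{a_1,…,a_n}` by replacing `m` of the vectors with `h_{I_1},…,h_{I_m}`,
for every `k < m` there is exactly one `i ∈ I_k \ I_{k+1}` such that replacing
`h_{I_k}` by `a_i` yields a linearly independent set whose cone contains that of `A_1`. -/
theorem stmt_6 (n m : ℕ) (hm2 : 2 ≤ m) (hmn : m ≤ n - 1)
    (a : Fin n → (Fin n → ℝ)) (ha : LinearIndependent ℝ a)
    (I : Fin m → Finset (Fin n)) (hI2 : ∀ j, 2 ≤ (I j).card)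
    (hchain : ∀ j j' : Fin m, j < j' → I j' ⊂ I j)
    (R : Finset (Fin n)) (hR : R.card = m)
    (A₁ : Set (Fin n → ℝ))
    (hA₁ : A₁ = (a '' ((Finset.univ \ R : Finset (Fin n)) : Set (Fin n))) ∪
      Set.range (fun j : Fin m => ∑ t ∈ I j, a t))
    (hA₁card : A₁.ncard = n)
    (hA₁ind : LinearIndependent ℝ (Subtype.val : A₁ → (Fin n → ℝ))) :
    ∀ j : Fin m, ∀ hj : (j : ℕ) + 1 < m,
      ∃! i : Fin n, i ∈ I j \ I ⟨(j : ℕ) + 1, hj⟩ ∧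
        (LinearIndependent ℝ
            (Subtype.val : (insert (a i) (A₁ \ {∑ t ∈ I j, a t}) : Set (Fin n → ℝ)) →
              (Fin n → ℝ)) ∧
          coneOf A₁ ⊆ coneOf (insert (a i) (A₁ \ {∑ t ∈ I j, a t}))) := by
  classical
  intro k hk1
  have hn : m + 1 ≤ n := by omega
  set h : Fin m → (Fin n → ℝ) := fun j => ∑ t ∈ I j, a t with hh
  -- the index type
  set e : ({x // x ∈ Finset.univ \ R} ⊕ Fin m) → (Fin n → ℝ) :=
    Sum.elim (fun t => a ↑t) h with he
  have hA₁e : A₁ = Set.range e := by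
    rw [hA₁, he, Set.Sum.elim_range]
    congr 1
    ext x
    constructor
    · rintro ⟨t, ht, rfl⟩
      exact ⟨⟨t, ht⟩, rfl⟩
    · rintro ⟨t, rfl⟩
      exact ⟨↑t, t.2, rfl⟩
  have hcardsd : (Finset.univ \ R).card = n - m := by
    rw [Finset.card_sdiff_of_subset (Finset.subset_univ R), Finset.card_univ, hR, Fintype.card_fin]
  have hιcard : Fintype.card ({x // x ∈ Finset.univ \ R} ⊕ Fin m) = n := by
    simp only [Fintype.card_sum, Fintype.card_subtype, Fintype.card_fin]
    rw [Finset.filter_univ_mem, hcardsd]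
    omega
  have hinj : Function.Injective e := by
    have himg : (Finset.univ.image e).card
        = (Finset.univ : Finset ({x // x ∈ Finset.univ \ R} ⊕ Fin m)).card := by
      rw [← Set.ncard_coe_finset, Finset.coe_image, Finset.coe_univ, Set.image_univ, ← hA₁e,
        hA₁card]
      simp only [Finset.card_univ]
      exact (fintype_card_irrel.trans hιcard).symm
    have := Finset.card_image_iff.mp himg
    rw [Finset.coe_univ] at this
    exact Set.injOn_univ.mp this
  have hEind : LinearIndependent ℝ e := by
    have hmem : ∀ x, e x ∈ A₁ := by
      intro x; rw [hA₁e]; exact Set.mem_range_self x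
    have : LinearIndependent ℝ
        ((Subtype.val : A₁ → (Fin n → ℝ)) ∘ (fun x => (⟨e x, hmem x⟩ : A₁))) :=
      hA₁ind.comp _ (fun x y hxy => hinj (congrArg Subtype.val hxy))
    exact this
  haveI : Nonempty ({x // x ∈ Finset.univ \ R} ⊕ Fin m) := ⟨Sum.inr ⟨0, by omega⟩⟩
  have hfr : Module.finrank ℝ (Fin n → ℝ) = n := Module.finrank_fin_fun ℝ
  have hspanA₁ : Submodule.span ℝ (Set.range e) = ⊤ :=
    hEind.span_eq_top_of_card_eq_finrank (by rw [hfr]; exact fintype_card_irrel.trans hιcard)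
  -- basic membership facts
  have hmem_a : ∀ t, t ∉ R → a t ∈ A₁ := by
    intro t ht
    rw [hA₁]
    exact Or.inl ⟨t, by simp [ht], rfl⟩
  have hmem_h : ∀ j, h j ∈ A₁ := by
    intro j; rw [hA₁]; exact Or.inr ⟨j, rfl⟩
  have hane : ∀ t (ht : t ∉ R) (j : Fin m), a t ≠ h j := by
    intro t ht j hEq
    have : (Sum.inl ⟨t, by simp [ht]⟩ : {x // x ∈ Finset.univ \ R} ⊕ Fin m) = Sum.inr j :=
      hinj hEq
    simp at this
  have hhne : ∀ j j' : Fin m, j ≠ j' → h j ≠ h j' := by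
    intro j j' hne hEq
    exact hne (Sum.inr_injective (hinj hEq))
  -- the key claim from linear independence
  have hclaim : ∀ c : Fin m → ℝ,
      (∀ r ∈ R, (∑ j ∈ Finset.univ.filter (fun j => r ∈ I j), c j) = 0) → ∀ j, c j = 0 := by
    intro c hc0
    set D : Fin n → ℝ := fun t => ∑ j ∈ Finset.univ.filter (fun j => t ∈ I j), c j with hD
    have hsum : ∑ j, c j • h j = ∑ t : Fin n, D t • a t := by
      calc ∑ j, c j • h j = ∑ j, ∑ t ∈ I j, c j • a t := by
            simp only [hh]; simp [Finset.smul_sum]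
        _ = ∑ j, ∑ t : Fin n, (if t ∈ I j then c j • a t else 0) := by
            congr 1; ext j
            rw [Finset.sum_ite_mem, Finset.univ_inter]
        _ = ∑ t : Fin n, ∑ j, (if t ∈ I j then c j • a t else 0) := Finset.sum_comm
        _ = ∑ t : Fin n, D t • a t := by
            refine Finset.sum_congr rfl (fun t _ => ?_)
            simp only [hD]
            rw [Finset.sum_filter, Finset.sum_smul]
            exact Finset.sum_congr rfl (fun j _ => by split <;> simp)
    have h0 : ∑ x : ({x // x ∈ Finset.univ \ R} ⊕ Fin m),
        (Sum.elim (fun t : {x // x ∈ Finset.univ \ R} => -D ↑t) c) x • e x = 0 := by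
      rw [Fintype.sum_sum_type]
      simp only [he, Sum.elim_inl, Sum.elim_inr]
      have h2 : ∑ t : Fin n, D t • a t = ∑ t ∈ Finset.univ \ R, D t • a t := by
        rw [← Finset.sum_sdiff (Finset.subset_univ R)]
        have : ∑ t ∈ R, D t • a t = 0 :=
          Finset.sum_eq_zero (fun r hr => by simp only [hD]; rw [hc0 r hr]; simp)
        rw [this, add_zero]
      have h3 : ∑ t : {x // x ∈ Finset.univ \ R}, (-D ↑t) • a ↑t
          = -∑ t ∈ Finset.univ \ R, D t • a t := by
        rw [← Finset.sum_neg_distrib, ← Finset.sum_coe_sort (Finset.univ \ R)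
          (fun t => -(D t • a t))]
        congr 1; ext t; rw [neg_smul]
      rw [h3, hsum, h2, neg_add_cancel]
    intro j
    have := Fintype.linearIndependent_iff.mp hEind _ h0 (Sum.inr j)
    simpa using this
  -- trace sets are strictly decreasing
  have htrace : ∀ p q : Fin m, p < q → (I q ∩ R) ⊂ (I p ∩ R) := by
    intro p q hpq
    refine ⟨Finset.inter_subset_inter (hchain p q hpq).subset le_rfl, ?_⟩
    intro hsub
    have heq : ∀ r ∈ R, (r ∈ I p ↔ r ∈ I q) := by
      intro r hr
      constructor
      · intro hrp
        have := hsub (Finset.mem_inter.mpr ⟨hrp, hr⟩)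
        exact (Finset.mem_inter.mp this).1
      · intro hrq
        exact ((hchain p q hpq).subset hrq)
    set c : Fin m → ℝ := fun j => (if j = p then (1:ℝ) else 0) + (if j = q then (-1:ℝ) else 0)
      with hc
    have hcz : ∀ j, c j = 0 := by
      apply hclaim
      intro r hr
      simp only [hc]
      rw [Finset.sum_add_distrib, Finset.sum_ite_eq' _ p (fun _ => (1:ℝ)),
        Finset.sum_ite_eq' _ q (fun _ => (-1:ℝ))]
      simp only [Finset.mem_filter, Finset.mem_univ, true_and]
      by_cases hrp : r ∈ I p
      · rw [if_pos hrp, if_pos ((heq r hr).mp hrp)]; ring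
      · rw [if_neg hrp, if_neg (fun hrq => hrp ((heq r hr).mpr hrq))]; ring
    have := hcz p
    simp only [hc, if_pos rfl] at this
    rw [if_neg (Fin.ne_of_lt hpq)] at this
    norm_num at this
  -- the last trace is nonempty
  have hlast : (I ⟨m - 1, by omega⟩ ∩ R).Nonempty := by
    by_contra hemp
    rw [Finset.not_nonempty_iff_eq_empty] at hemp
    set c : Fin m → ℝ := fun j => if j = ⟨m - 1, by omega⟩ then (1:ℝ) else 0 with hc
    have hcz : ∀ j, c j = 0 := by
      apply hclaim
      intro r hr
      simp only [hc]
      rw [Finset.sum_ite_eq' _ _ (fun _ => (1:ℝ)), if_neg]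
      simp only [Finset.mem_filter, Finset.mem_univ, true_and]
      intro hrI
      exact Finset.notMem_empty r (hemp ▸ Finset.mem_inter.mpr ⟨hrI, hr⟩)
    have := hcz ⟨m - 1, by omega⟩
    simp only [hc, if_pos rfl] at this
    norm_num at this
  -- card of traces
  set S' : ℕ → Finset (Fin n) := fun p => if hp : p < m then I ⟨p, hp⟩ ∩ R else ∅ with hS'
  have hstrict' : ∀ p q, p < q → q < m → S' q ⊂ S' p := by
    intro p q hpq hq
    rw [hS']
    simp only
    rw [dif_pos hq, dif_pos (by omega : p < m)]
    exact htrace ⟨p, by omega⟩ ⟨q, hq⟩ (by exact hpq)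
  have hScard : ∀ p (hp : p < m), (I ⟨p, hp⟩ ∩ R).card = m - p := by
    intro p hp
    have hSp : S' p = I ⟨p, hp⟩ ∩ R := by rw [hS']; simp [hp]
    have hlow : 1 + (m - 1 - p) ≤ (S' p).card := by
      rcases Nat.lt_or_ge p (m-1) with hpm | hpm
      · have := chain_card_aux m S' hstrict' (m - 1 - p) p (by omega)
        have hne : 1 ≤ (S' (p + (m - 1 - p))).card := by
          have : p + (m - 1 - p) = m - 1 := by omega
          rw [this, hS']
          simp only
          rw [dif_pos (by omega : m - 1 < m)]
          exact Finset.card_pos.mpr hlast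
        omega
      · have hpe : p = m - 1 := by omega
        subst hpe
        have hne : 1 ≤ (S' (m-1)).card := by
          rw [hS']; simp only; rw [dif_pos (by omega : m - 1 < m)]
          exact Finset.card_pos.mpr hlast
        omega
    have hup : (S' p).card + p ≤ m := by
      have h0 := chain_card_aux m S' hstrict' p 0 (by omega)
      rw [zero_add] at h0
      have : (S' 0).card ≤ m := by
        rw [hS']; simp only; rw [dif_pos (by omega : 0 < m)]
        calc (I ⟨0, by omega⟩ ∩ R).card ≤ R.card := Finset.card_le_card
              (Finset.inter_subset_right)
          _ = m := hR
      omega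
    rw [hSp] at hlow hup
    omega
  -- the unique element i
  set k1 : Fin m := ⟨(k : ℕ) + 1, hk1⟩ with hk1def
  have hkk1 : k < k1 := by rw [hk1def]; exact Fin.mk_lt_mk.mpr (by omega) |>.trans_le le_rfl
  have hsubK : (I k1 ∩ R) ⊆ (I k ∩ R) := (htrace k k1 hkk1).subset
  have hcard1 : ((I k ∩ R) \ (I k1 ∩ R)).card = 1 := by
    rw [Finset.card_sdiff_of_subset hsubK]
    have e1 : (I k ∩ R).card = m - (k : ℕ) := by
      have := hScard (k : ℕ) k.isLt
      simpa using this
    have e2 : (I k1 ∩ R).card = m - ((k : ℕ) + 1) := hScard ((k : ℕ) + 1) hk1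
    rw [e1, e2]
    omega
  obtain ⟨i, hi⟩ := Finset.card_eq_one.mp hcard1
  have hiK : i ∈ (I k ∩ R) \ (I k1 ∩ R) := by rw [hi]; exact Finset.mem_singleton_self i
  have hiIk : i ∈ I k := (Finset.mem_inter.mp (Finset.mem_sdiff.mp hiK).1).1
  have hiR : i ∈ R := (Finset.mem_inter.mp (Finset.mem_sdiff.mp hiK).1).2
  have hiNk1 : i ∉ I k1 := by
    intro hcon
    exact (Finset.mem_sdiff.mp hiK).2 (Finset.mem_inter.mpr ⟨hcon, hiR⟩)
  have hunique : ∀ t, t ∈ I k → t ∉ I k1 → t ∈ R → t = i := by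
    intro t ht1 ht2 ht3
    have : t ∈ (I k ∩ R) \ (I k1 ∩ R) := Finset.mem_sdiff.mpr
      ⟨Finset.mem_inter.mpr ⟨ht1, ht3⟩, fun hcon => ht2 (Finset.mem_inter.mp hcon).1⟩
    rw [hi] at this
    exact Finset.mem_singleton.mp this
  -- the key decomposition of h k
  have hsubI : I k1 ⊆ I k := (hchain k k1 hkk1).subset
  have hiMem : i ∈ I k \ I k1 := Finset.mem_sdiff.mpr ⟨hiIk, hiNk1⟩
  have hkey : h k = h k1 + (a i + ∑ t ∈ (I k \ I k1).erase i, a t) := by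
    simp only [hh]
    rw [← Finset.sum_sdiff hsubI, Finset.add_sum_erase _ _ hiMem]
    abel
  have hnotR : ∀ t ∈ (I k \ I k1).erase i, t ∉ R := by
    intro t ht htR
    have ht' := Finset.mem_erase.mp ht
    have hts := Finset.mem_sdiff.mp ht'.2
    exact ht'.1 (hunique t hts.1 hts.2 htR)
  -- A₂ and its properties
  set A₂ : Set (Fin n → ℝ) := insert (a i) (A₁ \ {h k}) with hA₂
  have hmemA₂_h : ∀ j : Fin m, j ≠ k → h j ∈ A₂ := by
    intro j hjk
    exact Or.inr ⟨hmem_h j, hhne j k hjk⟩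
  have hmemA₂_a : ∀ t, t ∉ R → a t ∈ A₂ := by
    intro t ht
    exact Or.inr ⟨hmem_a t ht, hane t ht k⟩
  have hmemA₂_ai : a i ∈ A₂ := Or.inl rfl
  have hk1ne : k1 ≠ k := Fin.ne_of_gt hkk1
  -- span of A₂ is everything
  set e₂ : ({x // x ∈ Finset.univ \ R} ⊕ Fin m) → (Fin n → ℝ) :=
    Sum.elim (fun t : {x // x ∈ Finset.univ \ R} => a ↑t)
      (fun j => if j = k then a i else h j) with he₂
  have hrange₂ : Set.range e₂ = A₂ := by
    ext x
    constructor
    · rintro ⟨y, rfl⟩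
      rcases y with t | j
      · exact hmemA₂_a ↑t (by have := t.2; simp only [Finset.mem_sdiff] at this; exact this.2)
      · rw [he₂]
        simp only [Sum.elim_inr]
        split
        · exact hmemA₂_ai
        · exact hmemA₂_h j (by assumption)
    · intro hx
      rcases hx with hx | hx
      · exact ⟨Sum.inr k, by rw [he₂]; simp [hx]⟩
      · obtain ⟨hx1, hx2⟩ := hx
        rw [hA₁e] at hx1
        obtain ⟨y, rfl⟩ := hx1
        rcases y with t | j
        · exact ⟨Sum.inl t, rfl⟩
        · have hjk : j ≠ k := by
            intro hcon
            exact hx2 (by rw [hcon, he]; rfl)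
          refine ⟨Sum.inr j, ?_⟩
          rw [he₂]
          simp only [Sum.elim_inr, if_neg hjk]
          rfl
  have hmem_a_span : ∀ t, t ∉ R → a t ∈ Submodule.span ℝ (Set.range e₂) := by
    intro t ht
    exact Submodule.subset_span ⟨Sum.inl ⟨t, by simp [ht]⟩, rfl⟩
  have hspan₂ : ⊤ ≤ Submodule.span ℝ (Set.range e₂) := by
    rw [← hspanA₁]
    apply Submodule.span_le.mpr
    rintro x ⟨y, rfl⟩
    rcases y with t | j
    · exact hmem_a_span ↑t (by have := t.2; simp only [Finset.mem_sdiff] at this; exact this.2)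
    · by_cases hjk : j = k
      · have : e (Sum.inr j) = h k := by rw [hjk]; rfl
        rw [this, hkey]
        refine Submodule.add_mem _ ?_ (Submodule.add_mem _ ?_ ?_)
        · exact Submodule.subset_span ⟨Sum.inr k1, by rw [he₂]; simp [hk1ne]⟩
        · exact Submodule.subset_span ⟨Sum.inr k, by rw [he₂]; simp⟩
        · exact Submodule.sum_mem _ (fun t htmem => hmem_a_span t (hnotR t htmem))
      · exact Submodule.subset_span ⟨Sum.inr j, by rw [he₂]; simp [hjk]; rfl⟩
  have hE₂ind : LinearIndependent ℝ e₂ :=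
    linearIndependent_of_top_le_span_of_card_eq_finrank hspan₂
      (by rw [hfr]; exact fintype_card_irrel.trans hιcard)
  have hA₂ind : LinearIndependent ℝ (Subtype.val : A₂ → (Fin n → ℝ)) := by
    have := (linearIndepOn_id_range_iff hE₂ind.injective).mpr hE₂ind
    rw [hrange₂] at this; exact this
  -- cone containment
  have hcone : coneOf A₁ ⊆ coneOf A₂ := by
    apply coneOf_subset
    intro v hv
    by_cases hvh : v = h k
    · rw [hvh, hkey]
      refine coneOf_add (mem_coneOf_self (hmemA₂_h k1 hk1ne))
        (coneOf_add (mem_coneOf_self hmemA₂_ai) ?_)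
      exact sum_mem_coneOf _ _ (fun t htmem =>
        mem_coneOf_self (hmemA₂_a t (hnotR t htmem)))
    · exact mem_coneOf_self (Or.inr ⟨hv, hvh⟩)
  -- conclusion
  refine ⟨i, ⟨Finset.mem_sdiff.mpr ⟨hiIk, hiNk1⟩, hA₂ind, hcone⟩, ?_⟩
  -- uniqueness
  rintro i' ⟨hi'mem, _, hi'cone⟩
  by_contra hne
  obtain ⟨hi'Ik, hi'Nk1⟩ := Finset.mem_sdiff.mp hi'mem
  have hi'R : i' ∉ R := fun hcon => hne (hunique i' hi'Ik hi'Nk1 hcon)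
  have hai'A₁ : a i' ∈ A₁ \ {h k} := ⟨hmem_a i' hi'R, hane i' hi'R k⟩
  have hins : insert (a i') (A₁ \ {h k}) = A₁ \ {h k} := Set.insert_eq_self.mpr hai'A₁
  rw [hins] at hi'cone
  have hhk_cone : h k ∈ coneOf (A₁ \ {h k}) := hi'cone (mem_coneOf_self (hmem_h k))
  have hhk_span : h k ∈ Submodule.span ℝ (A₁ \ {h k}) := coneOf_subset_span hhk_cone
  have himg : (Subtype.val '' {y : A₁ | (y : Fin n → ℝ) ≠ h k}) = A₁ \ {h k} := by
    ext x
    constructor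
    · rintro ⟨⟨y, hy⟩, hy2, rfl⟩
      exact ⟨hy, hy2⟩
    · rintro ⟨hx1, hx2⟩
      exact ⟨⟨x, hx1⟩, hx2, rfl⟩
  have hnot := hA₁ind.notMem_span_image (s := {y : A₁ | (y : Fin n → ℝ) ≠ h k})
    (x := ⟨h k, hmem_h k⟩) (by simp)
  rw [himg] at hnot
  exact hnot hhk_span
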